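/- Let A = (V, μ, η, α) be a unital hom-associative algebra over a field K with unit e₂ = η(1) satisfying α(e₂) = e₂. Form Ṽ = K·e₁ ⊕ V (adjoining a new element e₁) and define: μ₁(e₁, u) = μ₁(u, e₁) = u for all u ∈ Ṽ and μ₁(x, y) = μ(x, y) for x, y ∈ V; η₁(1) = e₁; Δ₁(e₁) = e₁⊗e₁ and Δ₁(x) = α(x)⊗e₁ + e₁⊗α(x) − e₂⊗α(x) for x ∈ V; ε₁(e₁) = 1 and ε₁(x) = 0 for x ∈ V; α₁(e₁) = e₁ and α₁(x) = α(x) for x ∈ V (all extended linearly). Then: (a) (α₁⊗α₁)∘Δ₁ = Δ₁∘α₁; (b) (α₁⊗Δ₁)∘Δ₁ = (Δ₁⊗α₁)∘Δ₁; (c) (ε₁⊗α₁)(Δ₁(u)) = (α₁⊗ε₁)(Δ₁(u)) = α₁(α₁(u)) for all u ∈ Ṽ (identifying K⊗Ṽ and Ṽ⊗K with Ṽ); (d) Δ₁(μ₁(u,v)) = Δ₁(u)•Δ₁(v) for all u, v ∈ Ṽ, where (a⊗b)•(c⊗d) = μ₁(a,c)⊗μ₁(b,d); (e) ε₁(μ₁(u,v))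 = ε₁(u)ε₁(v) for all u, v ∈ Ṽ; and (f) ε₁∘α₁ = ε₁. In particular, (Ṽ, Δ₁, ε₁, α₁) is a counital hom-coassociative coalgebra compatible with the unital algebra (Ṽ, μ₁, η₁, α₁), so K₁(A) = (Ṽ, μ₁, η₁, Δ₁, ε₁, α₁) carries the Kaplansky hom-bialgebra structure. -/

import Mathlib

open TensorProduct

namespace Stmt4

variable {K V : Type*} [Field K] [AddCommGroup V] [Module K V]

/-- The extended space `Ṽ = K·e₁ ⊕ V`, realized as `K × V`, with `e₁ = (1,0)`
and `V` embedded via `x ↦ (0,x)`. -/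
abbrev Vt (K V : Type*) := K × V

/-- The embedding `V → Ṽ`. -/
def iota : V →ₗ[K] Vt K V := LinearMap.inr K K V

/-- The adjoined unit `e₁ ∈ Ṽ`. -/
def e₁ : Vt K V := (1, 0)

/-- The Kaplansky multiplication `μ₁` on `Ṽ`: `e₁` is a two-sided unit and
`μ₁` restricts to `μ` on `V`. -/
def mu₁ (μ : V →ₗ[K] V →ₗ[K] V) : Vt K V →ₗ[K] Vt K V →ₗ[K] Vt K V :=
  LinearMap.mk₂ K
    (fun p q => (p.1 * q.1, p.1 • q.2 + q.1 • p.2 + μ p.2 q.2))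
    (by intro p p' q; ext <;>
      simp [add_mul, add_smul, smul_add, map_add] <;> abel)
    (by intro c p q; ext <;>
      simp [mul_assoc, mul_smul, smul_add, smul_comm q.1 c, map_smul] <;> ring_nf)
    (by intro p q q'; ext <;>
      simp [mul_add, add_smul, smul_add, map_add] <;> abel)
    (by intro c p q; ext <;>
      simp [mul_smul, smul_add, smul_comm p.1 c, map_smul] <;> ring_nf)

/-- The twisting map `α₁` on `Ṽ`: `α₁(e₁) = e₁`, `α₁ = α` on `V`. -/
def alpha₁ (α : V →ₗ[K] V) : Vt K V →ₗ[K] Vt K V := LinearMap.prodMap LinearMap.id α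

/-- The counit `ε₁` on `Ṽ`: `ε₁(e₁) = 1`, `ε₁ = 0` on `V`. -/
def eps₁ : Vt K V →ₗ[K] K := LinearMap.fst K K V

/-- The Kaplansky comultiplication `Δ₁` on `Ṽ`: `Δ₁(e₁) = e₁ ⊗ e₁` and
`Δ₁(x) = α(x)⊗e₁ + e₁⊗α(x) − e₂⊗α(x)` for `x ∈ V`. -/
noncomputable def Delta₁ (α : V →ₗ[K] V) (e₂ : V) :
    Vt K V →ₗ[K] (Vt K V) ⊗[K] (Vt K V) :=
  (LinearMap.fst K K V).smulRight ((e₁ : Vt K V) ⊗ₜ[K] (e₁ : Vt K V))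
    + ((TensorProduct.mk K (Vt K V) (Vt K V)).flip e₁).comp
        ((iota : V →ₗ[K] Vt K V).comp (α.comp (LinearMap.snd K K V)))
    + (TensorProduct.mk K (Vt K V) (Vt K V) e₁).comp
        ((iota : V →ₗ[K] Vt K V).comp (α.comp (LinearMap.snd K K V)))
    - (TensorProduct.mk K (Vt K V) (Vt K V) (iota e₂)).comp
        ((iota : V →ₗ[K] Vt K V).comp (α.comp (LinearMap.snd K K V)))

/-- The multiplication `•` on `Ṽ ⊗ Ṽ` induced by `μ₁`:
`(a⊗b)•(c⊗d) = μ₁(a,c) ⊗ μ₁(b,d)`. -/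
noncomputable def bullet (μ : V →ₗ[K] V →ₗ[K] V) :
    (Vt K V ⊗[K] Vt K V) →ₗ[K] (Vt K V ⊗[K] Vt K V) →ₗ[K] (Vt K V ⊗[K] Vt K V) :=
  TensorProduct.curry
    ((TensorProduct.map (TensorProduct.lift (mu₁ μ)) (TensorProduct.lift (mu₁ μ))).comp
      (TensorProduct.tensorTensorTensorComm K (Vt K V) (Vt K V) (Vt K V) (Vt K V)).toLinearMap)

section Helpers

variable (μ : V →ₗ[K] V →ₗ[K] V) (α : V →ₗ[K] V) (e₂ : V)

lemma pair_eq (c : K) (x : V) : ((c, x) : Vt K V) = c • e₁ + iota x := by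
  simp [e₁, iota, Prod.ext_iff]

lemma mu₁_e₁_left (u : Vt K V) : mu₁ μ e₁ u = u := by
  cases u; simp [mu₁, e₁, Prod.ext_iff]

lemma mu₁_e₁_right (u : Vt K V) : mu₁ μ u e₁ = u := by
  cases u; simp [mu₁, e₁, Prod.ext_iff]

lemma mu₁_iota (x y : V) : mu₁ μ (iota x) (iota y) = iota (μ x y) := by
  simp [mu₁, iota, Prod.ext_iff]

lemma alpha₁_e₁ : alpha₁ α e₁ = e₁ := by simp [alpha₁, e₁, Prod.ext_iff]

lemma alpha₁_iota (x : V) : alpha₁ α (iota x) = iota (α x) := by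
  simp [alpha₁, iota, Prod.ext_iff]

lemma eps₁_e₁ : eps₁ (K := K) (V := V) e₁ = 1 := rfl

lemma eps₁_iota (x : V) : eps₁ (K := K) (iota x) = 0 := rfl

lemma Delta₁_e₁ : Delta₁ α e₂ e₁ = (e₁ : Vt K V) ⊗ₜ[K] (e₁ : Vt K V) := by
  simp [Delta₁, e₁, iota]
  rw [show ((0, 0) : Vt K V) = 0 from rfl]
  simp

lemma Delta₁_iota (x : V) :
    Delta₁ α e₂ (iota x)
      = iota (α x) ⊗ₜ[K] (e₁ : Vt K V) + (e₁ : Vt K V) ⊗ₜ[K] iota (α x)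
        - iota e₂ ⊗ₜ[K] iota (α x) := by
  simp [Delta₁, e₁, iota]

lemma bullet_tmul (a b c d : Vt K V) :
    bullet μ (a ⊗ₜ[K] b) (c ⊗ₜ[K] d) = mu₁ μ a c ⊗ₜ[K] mu₁ μ b d := by
  simp [bullet]

end Helpers

/-- first Kaplansky construction. Let `(V, μ, e₂, α)` be a unital
hom-associative algebra with `α(e₂) = e₂`. Then the data
`K₁(A) = (Ṽ, μ₁, η₁, Δ₁, ε₁, α₁)` defined above satisfies:
(a) comultiplicativity, (b) hom-coassociativity, (c) the hom-counital condition,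
(d) `Δ₁` is multiplicative for `μ₁` w.r.t. `•`, (e) `ε₁` is multiplicative, and
(f) `ε₁ ∘ α₁ = ε₁`; i.e. `K₁(A)` is a unital hom-bialgebra. -/
theorem stmt_4 (μ : V →ₗ[K] V →ₗ[K] V) (α : V →ₗ[K] V) (e₂ : V)
    (hmult : ∀ x y : V, α (μ x y) = μ (α x) (α y))
    (hassoc : ∀ x y z : V, μ (α x) (μ y z) = μ (μ x y) (α z))
    (hunitl : ∀ x : V, μ e₂ x = x) (hunitr : ∀ x : V, μ x e₂ = x)
    (hαe : α e₂ = e₂) :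
    -- (a) (α₁ ⊗ α₁) ∘ Δ₁ = Δ₁ ∘ α₁
    (∀ u : Vt K V, TensorProduct.map (alpha₁ α) (alpha₁ α) (Delta₁ α e₂ u)
        = Delta₁ α e₂ (alpha₁ α u)) ∧
    -- (b) (α₁ ⊗ Δ₁) ∘ Δ₁ = (Δ₁ ⊗ α₁) ∘ Δ₁
    (∀ u : Vt K V, TensorProduct.map (alpha₁ α) (Delta₁ α e₂) (Delta₁ α e₂ u)
        = TensorProduct.assoc K (Vt K V) (Vt K V) (Vt K V)
            (TensorProduct.map (Delta₁ α e₂) (alpha₁ α) (Delta₁ α e₂ u))) ∧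
    -- (c) (ε₁ ⊗ α₁)(Δ₁ u) = (α₁ ⊗ ε₁)(Δ₁ u) = α₁(α₁ u)
    (∀ u : Vt K V, TensorProduct.lid K (Vt K V)
        (TensorProduct.map (eps₁ (K := K) (V := V)) (alpha₁ α) (Delta₁ α e₂ u))
        = alpha₁ α (alpha₁ α u)) ∧
    (∀ u : Vt K V, TensorProduct.rid K (Vt K V)
        (TensorProduct.map (alpha₁ α) (eps₁ (K := K) (V := V)) (Delta₁ α e₂ u))
        = alpha₁ α (alpha₁ α u)) ∧
    -- (d) Δ₁(μ₁(u,v)) = Δ₁(u) • Δ₁(v)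
    (∀ u v : Vt K V, Delta₁ α e₂ (mu₁ μ u v)
        = bullet μ (Delta₁ α e₂ u) (Delta₁ α e₂ v)) ∧
    -- (e) ε₁(μ₁(u,v)) = ε₁(u)·ε₁(v)
    (∀ u v : Vt K V, eps₁ (mu₁ μ u v) = eps₁ u * eps₁ (K := K) (V := V) v) ∧
    -- (f) ε₁ ∘ α₁ = ε₁
    (∀ u : Vt K V, eps₁ (alpha₁ α u) = eps₁ (K := K) (V := V) u) := by
  refine ⟨?_, ?_, ?_, ?_, ?_, ?_, ?_⟩
  · rintro ⟨c, x⟩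
    rw [pair_eq]
    simp only [map_add, map_smul, Delta₁_e₁, Delta₁_iota, alpha₁_e₁, alpha₁_iota,
      TensorProduct.map_tmul, map_sub, hαe]
  · rintro ⟨c, x⟩
    rw [pair_eq]
    simp only [map_add, map_smul, map_sub, Delta₁_e₁, Delta₁_iota, alpha₁_e₁, alpha₁_iota,
      TensorProduct.map_tmul, TensorProduct.assoc_tmul, TensorProduct.tmul_add,
      TensorProduct.add_tmul, TensorProduct.tmul_sub, TensorProduct.sub_tmul, hαe]
    abel
  · rintro ⟨c, x⟩
    rw [pair_eq]
    simp only [map_add, map_smul, map_sub, Delta₁_e₁, Delta₁_iota, alpha₁_e₁, alpha₁_iota,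
      eps₁_e₁, eps₁_iota, TensorProduct.map_tmul, TensorProduct.lid_tmul, one_smul, zero_smul,
      smul_zero, zero_sub, add_zero, zero_add, sub_zero, neg_neg]
  · rintro ⟨c, x⟩
    rw [pair_eq]
    simp only [map_add, map_smul, map_sub, Delta₁_e₁, Delta₁_iota, alpha₁_e₁, alpha₁_iota,
      eps₁_e₁, eps₁_iota, TensorProduct.map_tmul, TensorProduct.rid_tmul, one_smul, zero_smul,
      smul_zero, zero_sub, add_zero, zero_add, sub_zero, neg_neg]
  · rintro ⟨c, x⟩ ⟨d, y⟩
    rw [pair_eq c x, pair_eq d y]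
    simp only [map_add, map_smul, map_sub, LinearMap.add_apply, LinearMap.smul_apply,
      LinearMap.sub_apply, mu₁_e₁_left, mu₁_e₁_right, mu₁_iota, Delta₁_e₁, Delta₁_iota,
      bullet_tmul, hmult, hunitl, hunitr, hαe,
      TensorProduct.tmul_add, TensorProduct.add_tmul, TensorProduct.tmul_sub,
      TensorProduct.sub_tmul, TensorProduct.tmul_smul, TensorProduct.smul_tmul',
      smul_add, smul_sub]
    abel
  · rintro ⟨c, x⟩ ⟨d, y⟩
    simp [mu₁, eps₁]
  · rintro ⟨c, x⟩
    simp [alpha₁, eps₁]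

end Stmt4
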